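/- For coprime p₊, p₋ ≥ 2 and integers 1 ≤ r, r' ≤ p₊-1, 1 ≤ s, s' ≤ p₋-1: h_{r,s} = h_{r',s'} if and only if (r', s') = (r, s) or (r', s') = (p₊ - r, p₋ - s). Consequently there are exactly (p₊-1)(p₋-1)/2 distinct values h_{r,s} in this range. -/

import Mathlib

open Finset

/-- For coprime `p₊, p₋ ≥ 2` and `1 ≤ r, r' ≤ p₊-1`, `1 ≤ s, s' ≤ p₋-1`:
`h_{r,s} = h_{r',s'}` iff `(r',s') = (r,s)` or `(r',s') = (p₊-r, p₋-s)`;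
consequently there are exactly `(p₊-1)(p₋-1)/2` distinct values `h_{r,s}`. -/
theorem stmt_6 (pp pm : ℤ) (hpp : 2 ≤ pp) (hpm : 2 ≤ pm) (hcop : IsCoprime pp pm) :
    (∀ r s r' s' : ℤ, 1 ≤ r → r ≤ pp - 1 → 1 ≤ s → s ≤ pm - 1 →
      1 ≤ r' → r' ≤ pp - 1 → 1 ≤ s' → s' ≤ pm - 1 →
      ((((r * pm - s * pp : ℤ) : ℚ) ^ 2 - ((pp - pm : ℤ) : ℚ) ^ 2) / (4 * pp * pm)
          = (((r' * pm - s' * pp : ℤ) : ℚ) ^ 2 - ((pp - pm : ℤ) : ℚ) ^ 2) / (4 * pp * pm)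
        ↔ ((r' = r ∧ s' = s) ∨ (r' = pp - r ∧ s' = pm - s)))) ∧
    ((Finset.Icc 1 (pp - 1) ×ˢ Finset.Icc 1 (pm - 1)).image
        (fun rs : ℤ × ℤ =>
          (((rs.1 * pm - rs.2 * pp : ℤ) : ℚ) ^ 2 - ((pp - pm : ℤ) : ℚ) ^ 2) / (4 * pp * pm))).card
      = ((pp - 1) * (pm - 1) / 2).toNat := by
  have hppQ : (0:ℚ) < (pp:ℚ) := by exact_mod_cast (by omega : (0:ℤ) < pp)
  have hpmQ : (0:ℚ) < (pm:ℚ) := by exact_mod_cast (by omega : (0:ℤ) < pm)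
  have hppne : (pp:ℤ) ≠ 0 := by omega
  have hden : (4 * (pp:ℚ) * pm) ≠ 0 := by positivity
  have key : ∀ r s r' s' : ℤ, 1 ≤ r → r ≤ pp - 1 → 1 ≤ s → s ≤ pm - 1 →
      1 ≤ r' → r' ≤ pp - 1 → 1 ≤ s' → s' ≤ pm - 1 →
      ((((r * pm - s * pp : ℤ) : ℚ) ^ 2 - ((pp - pm : ℤ) : ℚ) ^ 2) / (4 * pp * pm)
          = (((r' * pm - s' * pp : ℤ) : ℚ) ^ 2 - ((pp - pm : ℤ) : ℚ) ^ 2) / (4 * pp * pm)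
        ↔ ((r' = r ∧ s' = s) ∨ (r' = pp - r ∧ s' = pm - s))) := by
    intro r s r' s' hr1 hr2 hs1 hs2 hr1' hr2' hs1' hs2'
    constructor
    · intro h
      have hz : (r * pm - s * pp) ^ 2 = (r' * pm - s' * pp) ^ 2 := by
        field_simp at h; exact_mod_cast sub_left_inj.mp h
      have hfac : ((r' * pm - s' * pp) - (r * pm - s * pp)) *
          ((r' * pm - s' * pp) + (r * pm - s * pp)) = 0 := by linear_combination -hz
      rcases mul_eq_zero.mp hfac with hc | hc
      · left
        have hd : pp ∣ (r' - r) := hcop.dvd_of_dvd_mul_right ⟨s' - s, by linarith⟩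
        have hr0 : r' - r = 0 := Int.eq_zero_of_abs_lt_dvd hd (by
          rcases abs_cases (r' - r) with ⟨h, _⟩ | ⟨h, _⟩ <;> omega)
        have hrr : r' = r := by omega
        refine ⟨hrr, ?_⟩
        have : (s' - s) * pp = 0 := by rw [hrr] at hc; linarith
        rcases mul_eq_zero.mp this with h0 | h0
        · omega
        · omega
      · right
        have hd : pp ∣ (r' + r) := hcop.dvd_of_dvd_mul_right ⟨s' + s, by linarith⟩
        obtain ⟨k, hk⟩ := hd
        have hk1 : k = 1 := by
          rcases lt_trichotomy k 1 with h | h | h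
          · nlinarith
          · exact h
          · nlinarith
        rw [hk1, mul_one] at hk
        have hrr : r' = pp - r := by omega
        refine ⟨hrr, ?_⟩
        have : (s' + s) * pp = pm * pp := by rw [hrr] at hc; linarith
        have := mul_right_cancel₀ hppne this
        omega
    · rintro (⟨rfl, rfl⟩ | ⟨rfl, rfl⟩)
      · rfl
      · have : (((pp - r) * pm - (pm - s) * pp : ℤ) : ℚ) ^ 2
            = ((r * pm - s * pp : ℤ) : ℚ) ^ 2 := by push_cast; ring
        rw [this]
  refine ⟨key, ?_⟩
  set f : ℤ × ℤ → ℚ := fun rs : ℤ × ℤ =>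
      (((rs.1 * pm - rs.2 * pp : ℤ) : ℚ) ^ 2 - ((pp - pm : ℤ) : ℚ) ^ 2) / (4 * pp * pm) with hf
  set D : Finset (ℤ × ℤ) := Finset.Icc 1 (pp - 1) ×ˢ Finset.Icc 1 (pm - 1) with hD
  have hnot22 : ¬ ((2:ℤ) ∣ pp ∧ (2:ℤ) ∣ pm) := by
    rintro ⟨h1, h2⟩
    have := hcop.isUnit_of_dvd' h1 h2
    rw [Int.isUnit_iff] at this
    omega
  have hfiber : ∀ rs ∈ D, (D.filter (fun x => f x = f rs)).card = 2 := by
    intro rs hrs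
    rw [hD, Finset.mem_product, Finset.mem_Icc, Finset.mem_Icc] at hrs
    obtain ⟨⟨h1, h2⟩, h3, h4⟩ := hrs
    have hset : D.filter (fun x => f x = f rs) = {rs, (pp - rs.1, pm - rs.2)} := by
      ext x
      simp only [Finset.mem_filter, hD, Finset.mem_product, Finset.mem_Icc,
        Finset.mem_insert, Finset.mem_singleton]
      constructor
      · rintro ⟨⟨⟨hx1, hx2⟩, hx3, hx4⟩, hfx⟩
        rcases (key rs.1 rs.2 x.1 x.2 h1 h2 h3 h4 hx1 hx2 hx3 hx4).mp hfx.symm with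
            ⟨ha, hb⟩ | ⟨ha, hb⟩
        · left; exact Prod.ext ha hb
        · right; exact Prod.ext ha hb
      · rintro (rfl | rfl)
        · exact ⟨⟨⟨h1, h2⟩, h3, h4⟩, rfl⟩
        · refine ⟨⟨⟨by omega, by omega⟩, by omega, by omega⟩, ?_⟩
          exact ((key rs.1 rs.2 (pp - rs.1) (pm - rs.2) h1 h2 h3 h4 (by omega) (by omega)
            (by omega) (by omega)).mpr (Or.inr ⟨rfl, rfl⟩)).symm
    rw [hset]
    refine Finset.card_pair ?_
    intro heq
    rw [Prod.ext_iff] at heq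
    obtain ⟨e1, e2⟩ := heq
    exact hnot22 ⟨⟨rs.1, by omega⟩, ⟨rs.2, by omega⟩⟩
  have hsum : D.card = 2 * (D.image f).card := by
    have h2 : ∀ b ∈ D.image f, (D.filter (fun a => f a = b)).card = 2 := by
      intro b hb
      obtain ⟨rs, hrs, rfl⟩ := Finset.mem_image.mp hb
      exact hfiber rs hrs
    rw [Finset.card_eq_sum_card_image f D, Finset.sum_congr rfl h2,
      Finset.sum_const, smul_eq_mul, mul_comm]
  have hDcard : D.card = (pp - 1).toNat * (pm - 1).toNat := by
    rw [hD, Finset.card_product, Int.card_Icc, Int.card_Icc]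
    congr 1 <;> congr 1 <;> omega
  have hev : (2:ℤ) ∣ (pp - 1) * (pm - 1) := by
    rcases Int.even_or_odd pp with h | h
    · rcases Int.even_or_odd pm with h' | h'
      · exact absurd ⟨h.two_dvd, h'.two_dvd⟩ hnot22
      · obtain ⟨m, hm⟩ := h'; exact ⟨(pp - 1) * m, by rw [hm]; ring⟩
    · obtain ⟨m, hm⟩ := h; exact ⟨m * (pm - 1), by rw [hm]; ring⟩
  have ha : ((pp - 1).toNat : ℤ) = pp - 1 := by omega
  have hb : ((pm - 1).toNat : ℤ) = pm - 1 := by omega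
  have hP : (((pp - 1).toNat * (pm - 1).toNat : ℕ) : ℤ) = (pp - 1) * (pm - 1) := by
    push_cast; rw [ha, hb]
  show (D.image f).card = ((pp - 1) * (pm - 1) / 2).toNat
  omega
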